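/- arXiv:2105.00621 — 2 statements merged into one kernel-verified Lean document; each statement's English description precedes it below -/
import Mathlib

section
/- Let G = (V, E; w) be a graph with strictly positive edge weights. If the matching game Γ_G admits a PMAS, then G contains no induced path P_5 and no induced cycle C_5. Equivalently, there do not exist distinct vertices 1, 2, 3, 4, 5 such that the edge set of the induced subgraph on {1,...,5} contains {12, 23, 34, 45} and is contained in {12, 23, 34, 45, 15}. -/
open Finset

/-- `M` is a matching of the induced subgraph `G[S]`, given as a finite set of
(ordered representatives of) edges with endpoints in `S`, pairwise vertex-disjoint. -/
def IsMatchingIn {V : Type*} (G : SimpleGraph V) (S : Finset V)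
    (M : Finset (V × V)) : Prop :=
  (∀ p ∈ M, G.Adj p.1 p.2 ∧ p.1 ∈ S ∧ p.2 ∈ S) ∧
  (∀ p ∈ M, ∀ q ∈ M, p ≠ q →
    p.1 ≠ q.1 ∧ p.1 ≠ q.2 ∧ p.2 ≠ q.1 ∧ p.2 ≠ q.2)

/-- `r` is the maximum total weight of a matching in the induced subgraph `G[S]`. -/
def IsMaxMatchingWeight {V : Type*} (G : SimpleGraph V)
    (w : V → V → ℝ) (S : Finset V) (r : ℝ) : Prop :=
  (∃ M : Finset (V × V), IsMatchingIn G S M ∧ ∑ p ∈ M, w p.1 p.2 = r) ∧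
  (∀ M : Finset (V × V), IsMatchingIn G S M → ∑ p ∈ M, w p.1 p.2 ≤ r)

/-- A population monotonic allocation scheme (PMAS): `x S i` is the payoff of player `i`
in coalition `S`.  Efficiency holds for every nonempty coalition, and every player's
payoff is monotone under coalition inclusion. -/
def IsPMAS {N : Type*} [DecidableEq N] (γ : Finset N → ℝ)
    (x : Finset N → N → ℝ) : Prop :=
  (∀ S : Finset N, S.Nonempty → ∑ i ∈ S, x S i = γ S) ∧
  (∀ S T : Finset N, S ⊆ T → ∀ i ∈ S, x S i ≤ x T i)

/-- A single edge with endpoints in `S` gives a lower bound on the max matching weight. -/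
lemma single_edge_le {V : Type*} [DecidableEq V] {G : SimpleGraph V}
    {w : V → V → ℝ} {S : Finset V} {r : ℝ}
    (h : IsMaxMatchingWeight G w S r) {i j : V} (hij : G.Adj i j)
    (hi : i ∈ S) (hj : j ∈ S) : w i j ≤ r := by
  have := h.2 {(i, j)} ?_
  · simpa using this
  · refine ⟨?_, ?_⟩
    · intro p hp
      simp only [Finset.mem_singleton] at hp
      subst hp
      exact ⟨hij, hi, hj⟩
    · intro p hp q hq hpq
      simp only [Finset.mem_singleton] at hp hq
      exact absurd (hp.trans hq.symm) hpq

/-- If every admissible edge of `G[S]` has `j` as an endpoint and weight at most `B ≥ 0`,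
then the max matching weight is at most `B`. -/
lemma max_le_star {V : Type*} [DecidableEq V] {G : SimpleGraph V}
    {w : V → V → ℝ} {S : Finset V} {r : ℝ}
    (h : IsMaxMatchingWeight G w S r) (B : ℝ) (hB : 0 ≤ B) (j : V)
    (hstar : ∀ p : V × V, G.Adj p.1 p.2 → p.1 ∈ S → p.2 ∈ S →
      (p.1 = j ∨ p.2 = j) ∧ w p.1 p.2 ≤ B) : r ≤ B := by
  obtain ⟨⟨M, ⟨hadj, hdisj⟩, hsum⟩, _⟩ := h
  rw [← hsum]
  have hone : ∀ p ∈ M, ∀ q ∈ M, p = q := by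
    intro p hp q hq
    by_contra hpq
    obtain ⟨h1, h2, h3, h4⟩ := hdisj p hp q hq hpq
    obtain ⟨hpa, hp1, hp2⟩ := hadj p hp
    obtain ⟨hqa, hq1, hq2⟩ := hadj q hq
    have hpj := (hstar p hpa hp1 hp2).1
    have hqj := (hstar q hqa hq1 hq2).1
    rcases hpj with hpj | hpj <;> rcases hqj with hqj | hqj <;>
      simp_all
  rcases M.eq_empty_or_nonempty with hM | ⟨p, hp⟩
  · simp [hM, hB]
  · have hMp : M = {p} := by
      apply Finset.eq_singleton_iff_unique_mem.mpr
      exact ⟨hp, fun q hq => hone q hq p hp⟩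
    rw [hMp, Finset.sum_singleton]
    obtain ⟨hpa, hp1, hp2⟩ := hadj p (hMp ▸ Finset.mem_singleton_self p)
    exact (hstar p hpa hp1 hp2).2

/-- The value of a coalition consisting of a single edge. -/
lemma gamma_pair {V : Type*} [DecidableEq V] {G : SimpleGraph V}
    {w : V → V → ℝ} (hsym : ∀ a b : V, w a b = w b a)
    (hpos : ∀ a b : V, G.Adj a b → 0 < w a b)
    {i j : V} (hij : G.Adj i j) {r : ℝ}
    (h : IsMaxMatchingWeight G w ({i, j} : Finset V) r) : r = w i j := by
  have hle : r ≤ w i j := by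
    apply max_le_star h (w i j) (hpos i j hij).le j
    rintro ⟨p1, p2⟩ hadj hp1 hp2
    simp only [Finset.mem_insert, Finset.mem_singleton] at hp1 hp2
    have hne : p1 ≠ p2 := hadj.ne
    rcases hp1 with rfl | rfl <;> rcases hp2 with rfl | rfl
    · exact absurd rfl hne
    · exact ⟨Or.inr rfl, le_refl _⟩
    · exact ⟨Or.inl rfl, (hsym _ _).le⟩
    · exact absurd rfl hne
  have hge : w i j ≤ r :=
    single_edge_le h hij (by simp) (by simp)
  linarith

/-- The value of a path coalition `i - j - k` with `i, k` non-adjacent. -/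
lemma gamma_triple {V : Type*} [DecidableEq V] {G : SimpleGraph V}
    {w : V → V → ℝ} (hsym : ∀ a b : V, w a b = w b a)
    (hpos : ∀ a b : V, G.Adj a b → 0 < w a b)
    {i j k : V} (hij : G.Adj i j) (hjk : G.Adj j k) (hik : ¬ G.Adj i k) {r : ℝ}
    (h : IsMaxMatchingWeight G w ({i, j, k} : Finset V) r) :
    r = max (w i j) (w j k) := by
  have hle : r ≤ max (w i j) (w j k) := by
    apply max_le_star h _ (le_trans (hpos i j hij).le (le_max_left _ _)) j
    rintro ⟨p1, p2⟩ hadj hp1 hp2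
    simp only [Finset.mem_insert, Finset.mem_singleton] at hp1 hp2
    have hne : p1 ≠ p2 := hadj.ne
    have hki : ¬ G.Adj k i := fun hc => hik hc.symm
    rcases hp1 with rfl | rfl | rfl <;> rcases hp2 with rfl | rfl | rfl
    · exact absurd rfl hne
    · exact ⟨Or.inr rfl, le_max_left _ _⟩
    · exact absurd hadj hik
    · exact ⟨Or.inl rfl, (hsym _ _).le.trans (le_max_left _ _)⟩
    · exact absurd rfl hne
    · exact ⟨Or.inl rfl, le_max_right _ _⟩
    · exact absurd hadj hki
    · exact ⟨Or.inr rfl, (hsym _ _).le.trans (le_max_right _ _)⟩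
    · exact absurd rfl hne
  have hge1 : w i j ≤ r := single_edge_le h hij (by simp) (by simp)
  have hge2 : w j k ≤ r := single_edge_le h hjk (by simp) (by simp)
  have := max_le hge1 hge2
  linarith

/-- (P₅,C₅)-freeness (Lemma 3.8). -/
theorem matchingGame_P5_C5_free {V : Type*} [Fintype V] [DecidableEq V]
    (G : SimpleGraph V) (w : V → V → ℝ)
    (hsym : ∀ a b : V, w a b = w b a)
    (hpos : ∀ a b : V, G.Adj a b → 0 < w a b)
    (γ : Finset V → ℝ)
    (hγ : ∀ S : Finset V, IsMaxMatchingWeight G w S (γ S))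
    (hpmas : ∃ x : Finset V → V → ℝ, IsPMAS γ x) :
    ¬ ∃ v1 v2 v3 v4 v5 : V,
      v1 ≠ v2 ∧ v1 ≠ v3 ∧ v1 ≠ v4 ∧ v1 ≠ v5 ∧ v2 ≠ v3 ∧ v2 ≠ v4 ∧ v2 ≠ v5 ∧
      v3 ≠ v4 ∧ v3 ≠ v5 ∧ v4 ≠ v5 ∧
      G.Adj v1 v2 ∧ G.Adj v2 v3 ∧ G.Adj v3 v4 ∧ G.Adj v4 v5 ∧
      ¬ G.Adj v1 v3 ∧ ¬ G.Adj v1 v4 ∧ ¬ G.Adj v2 v4 ∧ ¬ G.Adj v2 v5 ∧ ¬ G.Adj v3 v5 := by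
  rintro ⟨v1, v2, v3, v4, v5, h12, h13, h14, h15, h23, h24, h25, h34, h35, h45,
    a12, a23, a34, a45, n13, n14, n24, n25, n35⟩
  obtain ⟨x, heff, hmono⟩ := hpmas
  set a := w v1 v2 with ha_def
  set b := w v2 v3 with hb_def
  set c := w v3 v4 with hc_def
  set d := w v4 v5 with hd_def
  have ha : 0 < a := hpos _ _ a12
  have hb : 0 < b := hpos _ _ a23
  have hc : 0 < c := hpos _ _ a34
  have hd : 0 < d := hpos _ _ a45
  -- coalition values
  have g12 : γ {v1, v2} = a := gamma_pair hsym hpos a12 (hγ _)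
  have g23 : γ {v2, v3} = b := gamma_pair hsym hpos a23 (hγ _)
  have g34 : γ {v3, v4} = c := gamma_pair hsym hpos a34 (hγ _)
  have g45 : γ {v4, v5} = d := gamma_pair hsym hpos a45 (hγ _)
  have g123 : γ {v1, v2, v3} = max a b := gamma_triple hsym hpos a12 a23 n13 (hγ _)
  have g234 : γ {v2, v3, v4} = max b c := gamma_triple hsym hpos a23 a34 n24 (hγ _)
  have g345 : γ {v3, v4, v5} = max c d := gamma_triple hsym hpos a34 a45 n35 (hγ _)
  -- efficiency, written out
  have epair : ∀ u v' : V, u ≠ v' →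
      x {u, v'} u + x {u, v'} v' = γ {u, v'} := by
    intro u v' huv
    rw [← heff {u, v'} ⟨u, by simp⟩, Finset.sum_pair huv]
  have etriple : ∀ u v' t : V, u ≠ v' → u ≠ t → v' ≠ t →
      x {u, v', t} u + x {u, v', t} v' + x {u, v', t} t = γ {u, v', t} := by
    intro u v' t h1 h2 h3
    rw [← heff {u, v', t} ⟨u, by simp⟩,
      Finset.sum_insert (by simp [h1, h2]), Finset.sum_pair h3]
    ring
  have e12 := epair v1 v2 h12; rw [g12] at e12
  have e23 := epair v2 v3 h23; rw [g23] at e23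
  have e34 := epair v3 v4 h34; rw [g34] at e34
  have e45 := epair v4 v5 h45; rw [g45] at e45
  have e123 := etriple v1 v2 v3 h12 h13 h23; rw [g123] at e123
  have e234 := etriple v2 v3 v4 h23 h24 h34; rw [g234] at e234
  have e345 := etriple v3 v4 v5 h34 h35 h45; rw [g345] at e345
  -- monotonicity facts
  have sub12 : ({v1, v2} : Finset V) ⊆ {v1, v2, v3} := by
    intro y hy; simp only [Finset.mem_insert, Finset.mem_singleton] at hy ⊢; tauto
  have sub23' : ({v2, v3} : Finset V) ⊆ {v1, v2, v3} := by
    intro y hy; simp only [Finset.mem_insert, Finset.mem_singleton] at hy ⊢; tauto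
  have sub23 : ({v2, v3} : Finset V) ⊆ {v2, v3, v4} := by
    intro y hy; simp only [Finset.mem_insert, Finset.mem_singleton] at hy ⊢; tauto
  have sub34' : ({v3, v4} : Finset V) ⊆ {v2, v3, v4} := by
    intro y hy; simp only [Finset.mem_insert, Finset.mem_singleton] at hy ⊢; tauto
  have sub34 : ({v3, v4} : Finset V) ⊆ {v3, v4, v5} := by
    intro y hy; simp only [Finset.mem_insert, Finset.mem_singleton] at hy ⊢; tauto
  have sub45 : ({v4, v5} : Finset V) ⊆ {v3, v4, v5} := by
    intro y hy; simp only [Finset.mem_insert, Finset.mem_singleton] at hy ⊢; tauto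
  have m1 : x {v1, v2} v1 ≤ x {v1, v2, v3} v1 := hmono _ _ sub12 v1 (by simp)
  have m2 : x {v1, v2} v2 ≤ x {v1, v2, v3} v2 := hmono _ _ sub12 v2 (by simp)
  have m3 : x {v2, v3} v3 ≤ x {v1, v2, v3} v3 := hmono _ _ sub23' v3 (by simp)
  have m4 : x {v2, v3} v2 ≤ x {v2, v3, v4} v2 := hmono _ _ sub23 v2 (by simp)
  have m5 : x {v2, v3} v3 ≤ x {v2, v3, v4} v3 := hmono _ _ sub23 v3 (by simp)
  have m6 : x {v3, v4} v3 ≤ x {v2, v3, v4} v3 := hmono _ _ sub34' v3 (by simp)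
  have m7 : x {v3, v4} v4 ≤ x {v2, v3, v4} v4 := hmono _ _ sub34' v4 (by simp)
  have m8 : x {v3, v4} v3 ≤ x {v3, v4, v5} v3 := hmono _ _ sub34 v3 (by simp)
  have m9 : x {v4, v5} v4 ≤ x {v3, v4, v5} v4 := hmono _ _ sub45 v4 (by simp)
  have m10 : x {v4, v5} v5 ≤ x {v3, v4, v5} v5 := hmono _ _ sub45 v5 (by simp)
  -- triangle inequalities
  -- from {v1,v2,v3}: x23(3) ≤ max a b − a
  have I1 : x {v2, v3} v3 ≤ max a b - a := by linarith
  -- from {v2,v3,v4}: x23(2) ≤ max b c − c  and  x34(4) ≤ max b c − b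
  have I2 : x {v2, v3} v2 ≤ max b c - c := by linarith
  have I3 : x {v3, v4} v4 ≤ max b c - b := by linarith
  -- from {v3,v4,v5}: x34(3) ≤ max c d − d
  have I4 : x {v3, v4} v3 ≤ max c d - d := by linarith
  -- final contradiction
  have hA : b ≤ (max b c - c) + (max a b - a) := by linarith
  have hB : c ≤ (max c d - d) + (max b c - b) := by linarith
  rcases max_choice a b with h1 | h1 <;> rcases max_choice b c with h2 | h2 <;>
    rcases max_choice c d with h3 | h3 <;>
    rw [h1, h2] at hA <;> rw [h2, h3] at hB <;> linarith
end

section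
/- Let G = (V, E; w) be a graph with strictly positive edge weights. If the matching game Γ_G admits a PMAS, then G contains no induced butterfly: there do not exist distinct vertices 1, 2, 3, 4, 5 whose induced subgraph has edge set exactly {12, 13, 23, 34, 35, 45} (two triangles sharing the single vertex 3). -/
open Finset

lemma edge_le_gamma {V : Type*} {G : SimpleGraph V} {w : V → V → ℝ}
    {S : Finset V} {r : ℝ} (h : IsMaxMatchingWeight G w S r)
    {a b : V} (hab : G.Adj a b) (ha : a ∈ S) (hb : b ∈ S) : w a b ≤ r := by
  have := h.2 {(a, b)} ?_
  · simpa using this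
  · constructor
    · intro p hp
      simp only [Finset.mem_singleton] at hp
      subst hp
      exact ⟨hab, ha, hb⟩
    · intro p hp q hq hne
      simp only [Finset.mem_singleton] at hp hq
      exact absurd (hp.trans hq.symm) hne

lemma gamma_le_of_small {V : Type*} [DecidableEq V] {G : SimpleGraph V} {w : V → V → ℝ}
    {S : Finset V} {r : ℝ} (h : IsMaxMatchingWeight G w S r) {c : ℝ} (hc : 0 ≤ c)
    (hcard : S.card ≤ 3)
    (hE : ∀ a b : V, G.Adj a b → a ∈ S → b ∈ S → w a b ≤ c) : r ≤ c := by
  obtain ⟨M, hM, hsum⟩ := h.1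
  have hM1 : M.card ≤ 1 := by
    by_contra hgt
    push_neg at hgt
    obtain ⟨p, hp, q, hq, hpq⟩ := Finset.one_lt_card.mp hgt
    obtain ⟨d1, d2, d3, d4⟩ := hM.2 p hp q hq hpq
    have hpe := hM.1 p hp
    have hqe := hM.1 q hq
    have hne12 : p.1 ≠ p.2 := hpe.1.ne
    have hne34 : q.1 ≠ q.2 := hqe.1.ne
    have hsub : ({p.1, p.2, q.1, q.2} : Finset V) ⊆ S := by
      intro z hz
      simp only [Finset.mem_insert, Finset.mem_singleton] at hz
      rcases hz with rfl | rfl | rfl | rfl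
      exacts [hpe.2.1, hpe.2.2, hqe.2.1, hqe.2.2]
    have hc4 : ({p.1, p.2, q.1, q.2} : Finset V).card = 4 := by
      rw [Finset.card_insert_of_notMem (by simp [hne12, d1, d2]),
          Finset.card_insert_of_notMem (by simp [d3, d4]),
          Finset.card_insert_of_notMem (by simp [hne34]),
          Finset.card_singleton]
    have := Finset.card_le_card hsub
    rw [hc4] at this
    omega
  rcases Finset.eq_empty_or_nonempty M with rfl | ⟨p, hp⟩
  · simp only [Finset.sum_empty] at hsum
    linarith
  · have hMp : M = {p} := by
      apply Finset.eq_singleton_iff_unique_mem.mpr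
      exact ⟨hp, fun q hq => Finset.card_le_one.mp hM1 q hq p hp⟩
    have hpe := hM.1 p hp
    calc r = w p.1 p.2 := by rw [← hsum, hMp, Finset.sum_singleton]
    _ ≤ c := hE _ _ hpe.1 hpe.2.1 hpe.2.2

lemma master_butterfly {V : Type*} [DecidableEq V] (G : SimpleGraph V) (w : V → V → ℝ)
    (hsym : ∀ a b : V, w a b = w b a)
    (hpos : ∀ a b : V, G.Adj a b → 0 < w a b)
    (γ : Finset V → ℝ) (hγ : ∀ S : Finset V, IsMaxMatchingWeight G w S (γ S))
    (x : Finset V → V → ℝ) (hx : IsPMAS γ x)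
    (v1 v2 v3 v4 v5 : V)
    (h12 : v1 ≠ v2) (h13 : v1 ≠ v3) (h14 : v1 ≠ v4) (h23 : v2 ≠ v3)
    (h34 : v3 ≠ v4) (h35 : v3 ≠ v5) (h45 : v4 ≠ v5)
    (a12 : G.Adj v1 v2) (a13 : G.Adj v1 v3) (a34 : G.Adj v3 v4) (a45 : G.Adj v4 v5)
    (n14 : ¬ G.Adj v1 v4)
    (hc : w v2 v3 ≤ w v1 v3) (hb : w v3 v5 ≤ w v3 v4) : False := by
  have p12 := hpos _ _ a12
  have p13 := hpos _ _ a13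
  have p34 := hpos _ _ a34
  have p45 := hpos _ _ a45
  -- pair coalitions
  have E13 : x {v1, v3} v1 + x {v1, v3} v3 = γ {v1, v3} := by
    have := hx.1 {v1, v3} ⟨v1, by simp⟩
    rwa [Finset.sum_pair h13] at this
  have E34 : x {v3, v4} v3 + x {v3, v4} v4 = γ {v3, v4} := by
    have := hx.1 {v3, v4} ⟨v3, by simp⟩
    rwa [Finset.sum_pair h34] at this
  have E12 : x {v1, v2} v1 + x {v1, v2} v2 = γ {v1, v2} := by
    have := hx.1 {v1, v2} ⟨v1, by simp⟩
    rwa [Finset.sum_pair h12] at this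
  have E45 : x {v4, v5} v4 + x {v4, v5} v5 = γ {v4, v5} := by
    have := hx.1 {v4, v5} ⟨v4, by simp⟩
    rwa [Finset.sum_pair h45] at this
  have g13 : w v1 v3 ≤ γ {v1, v3} := edge_le_gamma (hγ _) a13 (by simp) (by simp)
  have g34 : w v3 v4 ≤ γ {v3, v4} := edge_le_gamma (hγ _) a34 (by simp) (by simp)
  have g12 : w v1 v2 ≤ γ {v1, v2} := edge_le_gamma (hγ _) a12 (by simp) (by simp)
  have g45 : w v4 v5 ≤ γ {v4, v5} := edge_le_gamma (hγ _) a45 (by simp) (by simp)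
  -- path coalition P = {v1, v3, v4}
  have sumP : x {v1, v3, v4} v1 + (x {v1, v3, v4} v3 + x {v1, v3, v4} v4)
      = γ {v1, v3, v4} := by
    have := hx.1 {v1, v3, v4} ⟨v1, by simp⟩
    rwa [show ({v1, v3, v4} : Finset V) = insert v1 {v3, v4} from rfl,
      Finset.sum_insert (by simp [h13, h14]), Finset.sum_pair h34] at this
  have mP1 : x {v1, v3} v1 ≤ x {v1, v3, v4} v1 := by
    refine hx.2 _ _ ?_ v1 (by simp)
    intro z hz; simp only [Finset.mem_insert, Finset.mem_singleton] at hz ⊢; tauto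
  have mP3a : x {v1, v3} v3 ≤ x {v1, v3, v4} v3 := by
    refine hx.2 _ _ ?_ v3 (by simp)
    intro z hz; simp only [Finset.mem_insert, Finset.mem_singleton] at hz ⊢; tauto
  have mP3b : x {v3, v4} v3 ≤ x {v1, v3, v4} v3 := by
    refine hx.2 _ _ ?_ v3 (by simp)
    intro z hz; simp only [Finset.mem_insert, Finset.mem_singleton] at hz ⊢; tauto
  have mP4 : x {v3, v4} v4 ≤ x {v1, v3, v4} v4 := by
    refine hx.2 _ _ ?_ v4 (by simp)
    intro z hz; simp only [Finset.mem_insert, Finset.mem_singleton] at hz ⊢; tauto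
  have gPub : γ {v1, v3, v4} ≤ max (w v1 v3) (w v3 v4) := by
    refine gamma_le_of_small (hγ _) (p13.le.trans (le_max_left _ _)) ?_ ?_
    · rw [show ({v1, v3, v4} : Finset V) = insert v1 {v3, v4} from rfl,
        Finset.card_insert_of_notMem (by simp [h13, h14]),
        Finset.card_insert_of_notMem (by simp [h34]), Finset.card_singleton]
    · intro a b hab ha hb
      simp only [Finset.mem_insert, Finset.mem_singleton] at ha hb
      rcases ha with rfl | rfl | rfl <;> rcases hb with rfl | rfl | rfl <;>
        first
          | exact absurd hab G.irrefl
          | exact absurd hab n14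
          | exact absurd hab.symm n14
          | exact le_max_left _ _
          | exact le_max_right _ _
          | (rw [hsym]; exact le_max_left _ _)
          | (rw [hsym]; exact le_max_right _ _)
  -- triangle A = {v1, v2, v3}
  have sumA : x {v1, v2, v3} v1 + (x {v1, v2, v3} v2 + x {v1, v2, v3} v3)
      = γ {v1, v2, v3} := by
    have := hx.1 {v1, v2, v3} ⟨v1, by simp⟩
    rwa [show ({v1, v2, v3} : Finset V) = insert v1 {v2, v3} from rfl,
      Finset.sum_insert (by simp [h12, h13]), Finset.sum_pair h23] at this
  have mA1 : x {v1, v2} v1 ≤ x {v1, v2, v3} v1 := by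
    refine hx.2 _ _ ?_ v1 (by simp)
    intro z hz; simp only [Finset.mem_insert, Finset.mem_singleton] at hz ⊢; tauto
  have mA2 : x {v1, v2} v2 ≤ x {v1, v2, v3} v2 := by
    refine hx.2 _ _ ?_ v2 (by simp)
    intro z hz; simp only [Finset.mem_insert, Finset.mem_singleton] at hz ⊢; tauto
  have mA3 : x {v1, v3} v3 ≤ x {v1, v2, v3} v3 := by
    refine hx.2 _ _ ?_ v3 (by simp)
    intro z hz; simp only [Finset.mem_insert, Finset.mem_singleton] at hz ⊢; tauto
  have gAub : γ {v1, v2, v3} ≤ max (w v1 v2) (w v1 v3) := by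
    refine gamma_le_of_small (hγ _) (p12.le.trans (le_max_left _ _)) ?_ ?_
    · rw [show ({v1, v2, v3} : Finset V) = insert v1 {v2, v3} from rfl,
        Finset.card_insert_of_notMem (by simp [h12, h13]),
        Finset.card_insert_of_notMem (by simp [h23]), Finset.card_singleton]
    · intro a b hab ha hb
      simp only [Finset.mem_insert, Finset.mem_singleton] at ha hb
      rcases ha with rfl | rfl | rfl <;> rcases hb with rfl | rfl | rfl <;>
        first
          | exact absurd hab G.irrefl
          | exact le_max_left _ _
          | exact le_max_right _ _
          | exact le_trans hc (le_max_right _ _)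
          | (rw [hsym]; exact le_max_left _ _)
          | (rw [hsym]; exact le_max_right _ _)
          | (rw [hsym]; exact le_trans hc (le_max_right _ _))
  -- triangle B = {v3, v4, v5}
  have sumB : x {v3, v4, v5} v3 + (x {v3, v4, v5} v4 + x {v3, v4, v5} v5)
      = γ {v3, v4, v5} := by
    have := hx.1 {v3, v4, v5} ⟨v3, by simp⟩
    rwa [show ({v3, v4, v5} : Finset V) = insert v3 {v4, v5} from rfl,
      Finset.sum_insert (by simp [h34, h35]), Finset.sum_pair h45] at this
  have mB3 : x {v3, v4} v3 ≤ x {v3, v4, v5} v3 := by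
    refine hx.2 _ _ ?_ v3 (by simp)
    intro z hz; simp only [Finset.mem_insert, Finset.mem_singleton] at hz ⊢; tauto
  have mB4 : x {v4, v5} v4 ≤ x {v3, v4, v5} v4 := by
    refine hx.2 _ _ ?_ v4 (by simp)
    intro z hz; simp only [Finset.mem_insert, Finset.mem_singleton] at hz ⊢; tauto
  have mB5 : x {v4, v5} v5 ≤ x {v3, v4, v5} v5 := by
    refine hx.2 _ _ ?_ v5 (by simp)
    intro z hz; simp only [Finset.mem_insert, Finset.mem_singleton] at hz ⊢; tauto
  have gBub : γ {v3, v4, v5} ≤ max (w v4 v5) (w v3 v4) := by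
    refine gamma_le_of_small (hγ _) (p45.le.trans (le_max_left _ _)) ?_ ?_
    · rw [show ({v3, v4, v5} : Finset V) = insert v3 {v4, v5} from rfl,
        Finset.card_insert_of_notMem (by simp [h34, h35]),
        Finset.card_insert_of_notMem (by simp [h45]), Finset.card_singleton]
    · intro a b hab ha hb
      simp only [Finset.mem_insert, Finset.mem_singleton] at ha hb
      rcases ha with rfl | rfl | rfl <;> rcases hb with rfl | rfl | rfl <;>
        first
          | exact absurd hab G.irrefl
          | exact le_max_left _ _
          | exact le_max_right _ _
          | exact le_trans hb (le_max_right _ _)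
          | (rw [hsym]; exact le_max_left _ _)
          | (rw [hsym]; exact le_max_right _ _)
          | (rw [hsym]; exact le_trans hb (le_max_right _ _))
  -- abbreviations
  set α := x {v1, v3} v3 with hα
  set β := x {v3, v4} v3 with hβ
  -- the path inequality: w13 + w34 ≤ γP + α and γP + β
  have hkey : w v1 v3 + w v3 v4 ≤ γ {v1, v3, v4} + α ∧
      w v1 v3 + w v3 v4 ≤ γ {v1, v3, v4} + β := by
    rcases le_total α β with h | h
    · exact ⟨by linarith, by linarith⟩
    · exact ⟨by linarith, by linarith⟩
  -- triangle bounds: α < w13 and β < w34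
  have hmaxA : max (w v1 v2) (w v1 v3) < w v1 v2 + w v1 v3 :=
    max_lt (by linarith) (by linarith)
  have hmaxB : max (w v4 v5) (w v3 v4) < w v4 v5 + w v3 v4 :=
    max_lt (by linarith) (by linarith)
  have hαlt : α < w v1 v3 := by
    have : α + w v1 v2 ≤ max (w v1 v2) (w v1 v3) := by linarith
    linarith
  have hβlt : β < w v3 v4 := by
    have : β + w v4 v5 ≤ max (w v4 v5) (w v3 v4) := by linarith
    linarith
  rcases le_total (w v1 v3) (w v3 v4) with hW | hW
  · have hm := max_eq_right hW
    have := hkey.1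
    rw [← hm] at hW
    linarith [gPub, hm ▸ gPub]
  · have hm := max_eq_left hW
    linarith [hkey.2, hm ▸ gPub]

/-- Butterfly-freeness (Lemma 3.10). -/
theorem matchingGame_butterfly_free {V : Type*} [Fintype V] [DecidableEq V]
    (G : SimpleGraph V) (w : V → V → ℝ)
    (hsym : ∀ a b : V, w a b = w b a)
    (hpos : ∀ a b : V, G.Adj a b → 0 < w a b)
    (γ : Finset V → ℝ)
    (hγ : ∀ S : Finset V, IsMaxMatchingWeight G w S (γ S))
    (hpmas : ∃ x : Finset V → V → ℝ, IsPMAS γ x) :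
    ¬ ∃ v1 v2 v3 v4 v5 : V,
      v1 ≠ v2 ∧ v1 ≠ v3 ∧ v1 ≠ v4 ∧ v1 ≠ v5 ∧ v2 ≠ v3 ∧ v2 ≠ v4 ∧ v2 ≠ v5 ∧
      v3 ≠ v4 ∧ v3 ≠ v5 ∧ v4 ≠ v5 ∧
      G.Adj v1 v2 ∧ G.Adj v1 v3 ∧ G.Adj v2 v3 ∧ G.Adj v3 v4 ∧ G.Adj v3 v5 ∧ G.Adj v4 v5 ∧
      ¬ G.Adj v1 v4 ∧ ¬ G.Adj v1 v5 ∧ ¬ G.Adj v2 v4 ∧ ¬ G.Adj v2 v5 := by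
  obtain ⟨x, hx⟩ := hpmas
  rintro ⟨v1, v2, v3, v4, v5, h12, h13, h14, h15, h23, h24, h25, h34, h35, h45,
    a12, a13, a23, a34, a35, a45, n14, n15, n24, n25⟩
  rcases le_total (w v2 v3) (w v1 v3) with hc | hc <;>
    rcases le_total (w v3 v5) (w v3 v4) with hb | hb
  · exact master_butterfly G w hsym hpos γ hγ x hx v1 v2 v3 v4 v5
      h12 h13 h14 h23 h34 h35 h45 a12 a13 a34 a45 n14 hc hb
  · exact master_butterfly G w hsym hpos γ hγ x hx v1 v2 v3 v5 v4
      h12 h13 h15 h23 h35 h34 h45.symm a12 a13 a35 a45.symm n15 hc hb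
  · exact master_butterfly G w hsym hpos γ hγ x hx v2 v1 v3 v4 v5
      h12.symm h23 h24 h13 h34 h35 h45 a12.symm a23 a34 a45 n24 hc hb
  · exact master_butterfly G w hsym hpos γ hγ x hx v2 v1 v3 v5 v4
      h12.symm h23 h25 h13 h35 h34 h45.symm a12.symm a23 a35 a45.symm n25 hc hb
end
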